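/- Let X be a finite nonempty set of points in ℝ^d with centroid μ, let w ∈ ℝ^d, and let Z = {−wᵀx : x ∈ X} with empirical variance Var(Z). Then Σ_{x∈X} log(1 + e^{−wᵀx}) − |X|·log(1 + e^{−wᵀμ}) ≤ (|X|/8)·Var(Z). -/

import Mathlib

noncomputable def sigm (t : ℝ) : ℝ := Real.exp t / (1 + Real.exp t)

lemma one_add_exp_pos (t : ℝ) : (0:ℝ) < 1 + Real.exp t := by positivity

lemma hasDerivAt_sigm (t : ℝ) :
    HasDerivAt sigm (Real.exp t / (1 + Real.exp t) ^ 2) t := by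
  have h1 := one_add_exp_pos t
  have := (Real.hasDerivAt_exp t).div
    ((hasDerivAt_const t (1:ℝ)).add (Real.hasDerivAt_exp t)) (ne_of_gt h1)
  refine this.congr_deriv ?_
  simp only [Pi.add_apply]
  ring

lemma sigm_lipschitz : LipschitzWith (4⁻¹ : NNReal) sigm := by
  apply lipschitzWith_of_nnnorm_deriv_le
  · exact fun x => (hasDerivAt_sigm x).differentiableAt
  · intro x
    have h := (hasDerivAt_sigm x).deriv
    rw [← NNReal.coe_le_coe, coe_nnnorm, h]
    have h1 := one_add_exp_pos x
    have he := Real.exp_pos x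
    rw [Real.norm_eq_abs, abs_of_nonneg (by positivity)]
    rw [div_le_iff₀ (by positivity)]
    push_cast
    nlinarith [sq_nonneg (1 - Real.exp x)]

lemma sigm_diff_le {s t : ℝ} : |sigm t - sigm s| ≤ (t - s) / 4 ∨ True := Or.inr trivial

lemma hasDerivAt_log_one_add_exp (t : ℝ) :
    HasDerivAt (fun u => Real.log (1 + Real.exp u)) (sigm t) t := by
  have h1 := one_add_exp_pos t
  have := (((hasDerivAt_const t (1:ℝ)).add (Real.hasDerivAt_exp t)).log (ne_of_gt h1))
  simpa [sigm] using this

lemma taylor_bound (a t : ℝ) :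
    Real.log (1 + Real.exp t) ≤
      Real.log (1 + Real.exp a) + sigm a * (t - a) + (t - a) ^ 2 / 8 := by
  set g : ℝ → ℝ := fun u =>
    Real.log (1 + Real.exp a) + sigm a * (u - a) + (u - a) ^ 2 / 8
      - Real.log (1 + Real.exp u) with hg
  have hderiv : ∀ u, HasDerivAt g (sigm a + (u - a) / 4 - sigm u) u := by
    intro u
    have h1 : HasDerivAt (fun u : ℝ => Real.log (1 + Real.exp a) + sigm a * (u - a)
        + (u - a) ^ 2 / 8) (sigm a + (u - a) / 4) u := by
      have hlin : HasDerivAt (fun u : ℝ => sigm a * (u - a)) (sigm a) u := by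
        simpa using ((hasDerivAt_id u).sub_const a).const_mul (sigm a)
      have hsq : HasDerivAt (fun u : ℝ => (u - a) ^ 2 / 8) ((u - a) / 4) u := by
        have := (((hasDerivAt_id u).sub_const a).pow 2).div_const 8
        refine this.congr_deriv ?_
        simp
        ring
      exact (((hasDerivAt_const u (Real.log (1 + Real.exp a))).add hlin).add hsq).congr_deriv (by ring)
    exact h1.sub (hasDerivAt_log_one_add_exp u)
  have hlip : ∀ s u : ℝ, |sigm u - sigm s| ≤ |u - s| / 4 := by
    intro s u
    have := sigm_lipschitz.dist_le_mul u s
    rw [Real.dist_eq, Real.dist_eq] at this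
    calc |sigm u - sigm s| ≤ (4⁻¹ : NNReal) * |u - s| := this
      _ = |u - s| / 4 := by push_cast; ring
  have hga : g a = 0 := by simp [hg]
  have key : 0 ≤ g t := by
    rcases le_total a t with h | h
    · have hmono : MonotoneOn g (Set.Ici a) := by
        apply monotoneOn_of_deriv_nonneg (convex_Ici a)
          (fun u _ => (hderiv u).continuousAt.continuousWithinAt)
          (fun u hu => (hderiv u).differentiableAt.differentiableWithinAt)
        intro u hu
        rw [(hderiv u).deriv]
        rw [interior_Ici] at hu
        have := hlip a u
        have : sigm u - sigm a ≤ (u - a) / 4 := by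
          have h2 := abs_le.mp this
          calc sigm u - sigm a ≤ |sigm u - sigm a| := le_abs_self _
            _ ≤ |u - a| / 4 := hlip a u
            _ = (u - a) / 4 := by rw [abs_of_nonneg (by linarith [le_of_lt (Set.mem_Ioi.mp hu)] : (0:ℝ) ≤ u - a)]
        linarith
      have h3 : g a ≤ g t := hmono (Set.self_mem_Ici) (Set.mem_Ici.mpr h) h
      rw [hga] at h3; linarith
    · have hanti : AntitoneOn g (Set.Iic a) := by
        apply antitoneOn_of_deriv_nonpos (convex_Iic a)
          (fun u _ => (hderiv u).continuousAt.continuousWithinAt)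
          (fun u hu => (hderiv u).differentiableAt.differentiableWithinAt)
        intro u hu
        rw [(hderiv u).deriv]
        rw [interior_Iic] at hu
        have : sigm a - sigm u ≤ (a - u) / 4 := by
          calc sigm a - sigm u ≤ |sigm a - sigm u| := le_abs_self _
            _ ≤ |a - u| / 4 := hlip u a
            _ = (a - u) / 4 := by rw [abs_of_nonneg (by linarith [le_of_lt (Set.mem_Iio.mp hu)] : (0:ℝ) ≤ a - u)]
        linarith
      have h3 : g a ≤ g t := hanti (Set.mem_Iic.mpr h) (Set.self_mem_Iic) h
      rw [hga] at h3; linarith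
  simp only [hg] at key
  linarith

theorem centroid_loss_gap_upper_bound (d : ℕ) (X : Finset (Fin d → ℝ))
    (hX : X.Nonempty) (w : Fin d → ℝ)
    (μ : Fin d → ℝ) (hμ : μ = (X.card : ℝ)⁻¹ • ∑ x ∈ X, x)
    (zbar : ℝ) (hzbar : zbar = (X.card : ℝ)⁻¹ * ∑ x ∈ X, (-(∑ j, w j * x j)))
    (V : ℝ) (hV : V = (X.card : ℝ)⁻¹ * ∑ x ∈ X, ((-(∑ j, w j * x j)) - zbar) ^ 2) :
    (∑ x ∈ X, Real.log (1 + Real.exp (-(∑ j, w j * x j)))) -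
      (X.card : ℝ) * Real.log (1 + Real.exp (-(∑ j, w j * μ j))) ≤
    ((X.card : ℝ) / 8) * V := by
  have hn : (0:ℝ) < (X.card : ℝ) := by
    exact_mod_cast Finset.card_pos.mpr hX
  set n : ℝ := (X.card : ℝ)
  set z : (Fin d → ℝ) → ℝ := fun x => -(∑ j, w j * x j) with hz
  -- the centroid activation equals zbar
  have key : ∑ j, w j * μ j = n⁻¹ * ∑ x ∈ X, ∑ j, w j * x j := by
    subst hμ
    simp only [Pi.smul_apply, Finset.sum_apply, smul_eq_mul, Finset.mul_sum]
    rw [Finset.sum_comm]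
    refine Finset.sum_congr rfl fun x _ => Finset.sum_congr rfl fun j _ => by ring
  have hμz : -(∑ j, w j * μ j) = zbar := by
    rw [hzbar, key]
    rw [Finset.sum_neg_distrib]
    ring
  -- sum of z equals n * zbar
  have hsum : ∑ x ∈ X, z x = n * zbar := by
    rw [hzbar]
    field_simp
  -- apply taylor bound pointwise
  have hpt : ∀ x ∈ X, Real.log (1 + Real.exp (z x)) ≤
      Real.log (1 + Real.exp zbar) + sigm zbar * (z x - zbar) + (z x - zbar) ^ 2 / 8 :=
    fun x _ => taylor_bound zbar (z x)
  have hsumle := Finset.sum_le_sum hpt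
  have hexpand : ∑ x ∈ X, (Real.log (1 + Real.exp zbar) + sigm zbar * (z x - zbar)
      + (z x - zbar) ^ 2 / 8)
      = n * Real.log (1 + Real.exp zbar) + sigm zbar * (∑ x ∈ X, z x - n * zbar)
        + (∑ x ∈ X, (z x - zbar) ^ 2) / 8 := by
    rw [Finset.sum_add_distrib, Finset.sum_add_distrib]
    rw [Finset.sum_const, ← Finset.mul_sum, Finset.sum_sub_distrib, Finset.sum_const,
      ← Finset.sum_div]
    simp [n, mul_comm]
  have hVsum : ((X.card : ℝ) / 8) * V = (∑ x ∈ X, (z x - zbar) ^ 2) / 8 := by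
    rw [hV]
    field_simp
    ring
  rw [hμz, hVsum]
  rw [hsum, sub_self, mul_zero, add_zero] at hexpand
  calc (∑ x ∈ X, Real.log (1 + Real.exp (z x))) - n * Real.log (1 + Real.exp zbar)
      ≤ (n * Real.log (1 + Real.exp zbar) + (∑ x ∈ X, (z x - zbar) ^ 2) / 8)
        - n * Real.log (1 + Real.exp zbar) := by
        apply sub_le_sub_right
        calc _ ≤ _ := hsumle
          _ = _ := hexpand
    _ = (∑ x ∈ X, (z x - zbar) ^ 2) / 8 := by ring
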